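/- Let A_1, ..., A_{n+2} be points in R^n with every n+1 affinely independent, α the affine dependence coefficients (∑ α_i = 0, ∑ α_i A_i = 0, all α_i ≠ 0). For 0 ≤ k ≤ n+1 and any points P, Q in R^n, define c_{k+1} = ∑_F (∏_{A_s ∈ F} α_s) · det( (A_s - P)·(A_t - Q) )_{A_s, A_t ∈ F}, where the sum runs over all (k+1)-element subsets F of {A_1, ..., A_{n+2}}. Then c_{k+1} is independent of the choice of P and Q. -/

import Mathlib

set_option maxHeartbeats 1000000

open scoped RealInnerProductSpace
open Finset

section Aux

open Polynomial Matrix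

/-- Determinant of a matrix that agrees with `M` on rows in `s` and is `x` times the
identity on rows outside `s`. -/
lemma det_ite_block {R : Type*} [CommRing R] {ι : Type*} [Fintype ι] [DecidableEq ι]
    (s : Finset ι) (M : Matrix ι ι R) (x : R) :
    (Matrix.of fun i j => if i ∈ s then M i j else if i = j then x else 0).det
      = x ^ (Fintype.card ι - s.card) *
        (M.submatrix (Subtype.val : {i // i ∈ s} → ι) Subtype.val).det := by
  have key := Matrix.twoBlockTriangular_det
    (Matrix.of fun i j => if i ∈ s then M i j else if i = j then x else 0) (fun i => i ∈ s)
    (by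
      intro i hi j hj
      have hij : i ≠ j := fun h => hi (h ▸ hj)
      simp only [Matrix.of_apply, if_neg hi, if_neg hij])
  have h1 : (Matrix.toSquareBlockProp
      (Matrix.of fun i j => if i ∈ s then M i j else if i = j then x else 0) (fun i => i ∈ s))
      = M.submatrix (Subtype.val : {i // i ∈ s} → ι) Subtype.val := by
    ext ⟨i, hi⟩ ⟨j, hj⟩
    simp [Matrix.toSquareBlockProp, hi]
  have h2 : (Matrix.toSquareBlockProp
      (Matrix.of fun i j => if i ∈ s then M i j else if i = j then x else 0)
        (fun i => ¬ (fun i => i ∈ s) i))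
      = Matrix.diagonal (fun _ => x) := by
    ext ⟨i, hi⟩ ⟨j, hj⟩
    simp [Matrix.toSquareBlockProp, hi, Matrix.diagonal, Subtype.ext_iff]
  rw [key, h1, h2, Matrix.det_diagonal, Finset.prod_const, mul_comm]
  have hc : Fintype.card {i // ¬ (fun i => i ∈ s) i} = Fintype.card ι - s.card := by
    simp only [Fintype.card_subtype_compl]
    congr 1
    exact Fintype.card_coe s
  rw [Finset.card_univ, hc]
  congr!

/-- Expansion of `det (X • 1 + C M)` as a sum over principal minors of `M`. -/
lemma det_expand {R : Type*} [CommRing R] {ι : Type*} [Fintype ι] [DecidableEq ι]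
    (M : Matrix ι ι R) :
    ((X : R[X]) • (1 : Matrix ι ι R[X]) + M.map C).det
      = ∑ s : Finset ι, (X : R[X]) ^ (Fintype.card ι - s.card) *
          C ((M.submatrix (Subtype.val : {i // i ∈ s} → ι) Subtype.val).det) := by
  have key := Matrix.detRowAlternating.toMultilinearMap.map_add_univ
      (fun i => (M.map C) i) (fun i => ((X : R[X]) • (1 : Matrix ι ι R[X])) i)
  have h0 : ((X : R[X]) • (1 : Matrix ι ι R[X]) + M.map C).det
      = Matrix.detRowAlternating
          ((fun i => (M.map C) i) + (fun i => ((X : R[X]) • (1 : Matrix ι ι R[X])) i)) := by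
    rw [add_comm]; rfl
  rw [h0]
  refine Eq.trans key ?_
  refine Finset.sum_congr rfl fun s _ => ?_
  have hmat : (s.piecewise (fun i => (M.map C) i)
        (fun i => ((X : R[X]) • (1 : Matrix ι ι R[X])) i))
      = (Matrix.of fun i j => if i ∈ s then (M.map C) i j
          else if i = j then (X : R[X]) else 0) := by
    funext i j
    by_cases hi : i ∈ s <;>
      simp [Finset.piecewise, hi, Matrix.one_apply, mul_ite]
  rw [hmat]
  show (Matrix.of fun i j => if i ∈ s then (M.map C) i j
      else if i = j then (X : R[X]) else 0).det = _
  rw [det_ite_block s (M.map C) (X : R[X]), Matrix.submatrix_map]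
  congr 1
  rw [RingHom.map_det, RingHom.mapMatrix_apply]

/-- The polynomial `det (X • 1 + C B)` of a real matrix `B`. -/
noncomputable def detpoly {ι : Type*} [Fintype ι] [DecidableEq ι] (B : Matrix ι ι ℝ) :
    Polynomial ℝ := ((X : ℝ[X]) • (1 : Matrix ι ι ℝ[X]) + B.map C).det

lemma detpoly_coeff {ι : Type*} [Fintype ι] [DecidableEq ι] (B : Matrix ι ι ℝ) (d : ℕ) :
    (detpoly B).coeff d
      = ∑ s ∈ (Finset.univ : Finset (Finset ι)).filter
          (fun s => d = Fintype.card ι - s.card),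
          (B.submatrix (Subtype.val : {i // i ∈ s} → ι) Subtype.val).det := by
  rw [detpoly, det_expand, Polynomial.finset_sum_coeff, Finset.sum_filter]
  refine Finset.sum_congr rfl fun s _ => ?_
  rw [mul_comm, Polynomial.coeff_C_mul, Polynomial.coeff_X_pow, mul_ite, mul_one, mul_zero]

lemma eval_detpoly {ι : Type*} [Fintype ι] [DecidableEq ι] (B : Matrix ι ι ℝ) (t : ℝ) :
    (detpoly B).eval t = (t • (1 : Matrix ι ι ℝ) + B).det := by
  have h := RingHom.map_det (Polynomial.evalRingHom t)
    ((X : ℝ[X]) • (1 : Matrix ι ι ℝ[X]) + B.map C)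
  rw [detpoly]
  show (Polynomial.evalRingHom t) ((X : ℝ[X]) • (1 : Matrix ι ι ℝ[X]) + B.map C).det = _
  rw [h]
  congr 1
  ext i j
  by_cases hij : i = j <;>
    simp [RingHom.mapMatrix_apply, Matrix.map_apply, Matrix.one_apply, hij]

lemma detpoly_ne_zero {ι : Type*} [Fintype ι] [DecidableEq ι] (B : Matrix ι ι ℝ) :
    detpoly B ≠ 0 := by
  intro h
  have h2 : (detpoly B).coeff (Fintype.card ι) = 1 := by
    rw [detpoly_coeff]
    have hfilter : (Finset.univ : Finset (Finset ι)).filter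
        (fun s => Fintype.card ι = Fintype.card ι - s.card) = {∅} := by
      ext s
      simp only [Finset.mem_filter, Finset.mem_univ, true_and, Finset.mem_singleton]
      constructor
      · intro hs
        have h3 := Finset.card_le_univ s
        rw [← Finset.card_eq_zero]
        omega
      · intro hs; subst hs; simp
    rw [hfilter, Finset.sum_singleton]
    have : IsEmpty {i : ι // i ∈ (∅ : Finset ι)} := by
      constructor; rintro ⟨i, hi⟩; simp at hi
    exact Matrix.det_isEmpty
  rw [h] at h2
  simp at h2

/-- The matrix determinant lemma in the case the correction term vanishes. -/
lemma det_add_rank_one {ι : Type*} [Fintype ι] [DecidableEq ι]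
    (A : Matrix ι ι ℝ) (hA : IsUnit A.det) (u v : ι → ℝ)
    (h : v ⬝ᵥ (A⁻¹ *ᵥ u) = 0) :
    (A + Matrix.replicateCol Unit u * Matrix.replicateRow Unit v).det = A.det := by
  rw [Matrix.det_add_replicateCol_mul_replicateRow hA u v, Matrix.mul_assoc, ← Matrix.replicateCol_mulVec]
  have : (1 + Matrix.replicateRow Unit v * Matrix.replicateCol Unit (A⁻¹ *ᵥ u)).det
      = 1 + v ⬝ᵥ (A⁻¹ *ᵥ u) := by
    rw [Matrix.det_unique, Matrix.add_apply, Matrix.one_apply_eq,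
      Matrix.replicateRow_mul_replicateCol_apply]
  rw [this, h, add_zero, mul_one]

lemma vecMul_tB {ι : Type*} [Fintype ι] [DecidableEq ι] (B : Matrix ι ι ℝ) (v : ι → ℝ)
    (t : ℝ) (h1 : ∀ j, ∑ i, v i * B i j = 0) :
    v ᵥ* (t • (1 : Matrix ι ι ℝ) + B) = t • v := by
  funext j
  simp only [Matrix.vecMul, dotProduct, Matrix.add_apply, Matrix.smul_apply,
    Matrix.one_apply, smul_eq_mul, mul_add, Finset.sum_add_distrib, h1 j, add_zero,
    mul_ite, mul_one, mul_zero, Finset.sum_ite_eq', Finset.mem_univ, if_true, Pi.smul_apply]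
  ring

lemma mulVec_tB {ι : Type*} [Fintype ι] [DecidableEq ι] (B : Matrix ι ι ℝ) (u : ι → ℝ)
    (t : ℝ) (h1 : ∀ i, ∑ j, B i j * u j = 0) :
    (t • (1 : Matrix ι ι ℝ) + B) *ᵥ u = t • u := by
  funext i
  simp only [Matrix.mulVec, dotProduct, Matrix.add_apply, Matrix.smul_apply,
    Matrix.one_apply, smul_eq_mul, add_mul, Finset.sum_add_distrib, h1 i, add_zero,
    ite_mul, one_mul, zero_mul, mul_ite, mul_one, mul_zero, Finset.sum_ite_eq,
    Finset.mem_univ, if_true, Pi.smul_apply]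

/-- `detpoly` is invariant under a rank-one update `u vᵀ` when `v` is a left null vector
of `B` orthogonal to `u`. -/
lemma detpoly_rank_one_left {ι : Type*} [Fintype ι] [DecidableEq ι]
    (B : Matrix ι ι ℝ) (u v : ι → ℝ)
    (h1 : ∀ j, ∑ i, v i * B i j = 0) (h2 : ∑ i, v i * u i = 0) :
    detpoly (B + Matrix.replicateCol Unit u * Matrix.replicateRow Unit v) = detpoly B := by
  apply Polynomial.eq_of_infinite_eval_eq
  have hfin : ({(0 : ℝ)} ∪ {x | (detpoly B).IsRoot x}).Finite :=
    (Set.finite_singleton 0).union (Polynomial.finite_setOf_isRoot (detpoly_ne_zero B))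
  refine hfin.infinite_compl.mono fun t ht => ?_
  simp only [Set.mem_compl_iff, Set.mem_union, Set.mem_singleton_iff, Set.mem_setOf_eq,
    not_or] at ht
  obtain ⟨ht0, htr⟩ := ht
  have hdet : (t • (1 : Matrix ι ι ℝ) + B).det ≠ 0 := by
    rw [← eval_detpoly]; exact htr
  have hA : IsUnit (t • (1 : Matrix ι ι ℝ) + B).det := isUnit_iff_ne_zero.mpr hdet
  show (detpoly _).eval t = (detpoly B).eval t
  rw [eval_detpoly, eval_detpoly, ← add_assoc]
  apply det_add_rank_one _ hA
  have hv := vecMul_tB B v t h1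
  have h3 : (v ᵥ* (t • (1 : Matrix ι ι ℝ) + B)) ᵥ* (t • (1 : Matrix ι ι ℝ) + B)⁻¹ = v := by
    rw [Matrix.vecMul_vecMul, Matrix.mul_nonsing_inv _ hA, Matrix.vecMul_one]
  rw [hv, Matrix.smul_vecMul] at h3
  have h4 : v ᵥ* (t • (1 : Matrix ι ι ℝ) + B)⁻¹ = t⁻¹ • v := by
    rw [eq_comm, inv_smul_eq_iff₀ ht0]
    exact h3.symm
  rw [Matrix.dotProduct_mulVec, h4, smul_dotProduct]
  have : v ⬝ᵥ u = 0 := h2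
  rw [this, smul_zero]

/-- `detpoly` is invariant under a rank-one update `u vᵀ` when `u` is a right null vector
of `B` orthogonal to `v`. -/
lemma detpoly_rank_one_right {ι : Type*} [Fintype ι] [DecidableEq ι]
    (B : Matrix ι ι ℝ) (u v : ι → ℝ)
    (h1 : ∀ i, ∑ j, B i j * u j = 0) (h2 : ∑ j, v j * u j = 0) :
    detpoly (B + Matrix.replicateCol Unit u * Matrix.replicateRow Unit v) = detpoly B := by
  apply Polynomial.eq_of_infinite_eval_eq
  have hfin : ({(0 : ℝ)} ∪ {x | (detpoly B).IsRoot x}).Finite :=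
    (Set.finite_singleton 0).union (Polynomial.finite_setOf_isRoot (detpoly_ne_zero B))
  refine hfin.infinite_compl.mono fun t ht => ?_
  simp only [Set.mem_compl_iff, Set.mem_union, Set.mem_singleton_iff, Set.mem_setOf_eq,
    not_or] at ht
  obtain ⟨ht0, htr⟩ := ht
  have hdet : (t • (1 : Matrix ι ι ℝ) + B).det ≠ 0 := by
    rw [← eval_detpoly]; exact htr
  have hA : IsUnit (t • (1 : Matrix ι ι ℝ) + B).det := isUnit_iff_ne_zero.mpr hdet
  show (detpoly _).eval t = (detpoly B).eval t
  rw [eval_detpoly, eval_detpoly, ← add_assoc]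
  apply det_add_rank_one _ hA
  have hu := mulVec_tB B u t h1
  have h3 : (t • (1 : Matrix ι ι ℝ) + B)⁻¹ *ᵥ ((t • (1 : Matrix ι ι ℝ) + B) *ᵥ u) = u := by
    rw [Matrix.mulVec_mulVec, Matrix.nonsing_inv_mul _ hA, Matrix.one_mulVec]
  rw [hu, Matrix.mulVec_smul] at h3
  have h4 : (t • (1 : Matrix ι ι ℝ) + B)⁻¹ *ᵥ u = t⁻¹ • u := by
    rw [eq_comm, inv_smul_eq_iff₀ ht0]
    exact h3.symm
  rw [h4, dotProduct_smul]
  have : v ⬝ᵥ u = 0 := h2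
  rw [this, smul_zero]

lemma col_mul_row_apply {ι : Type*} (u v : ι → ℝ) (i j : ι) :
    (Matrix.replicateCol Unit u * Matrix.replicateRow Unit v) i j = u i * v j := by
  simp [Matrix.mul_apply]

end Aux

/-- Invariance of `c_{k+1}(α^{k+1})`: the sum over all `(k+1)`-element subsets `F` of the
vertices of `(∏_{s ∈ F} α_s) · det((A_s - P)·(A_t - Q))_{s,t ∈ F}` does not depend on the
choice of the base points `P` and `Q`. -/
theorem c_k_invariant (n k : ℕ) (hk : k ≤ n + 1)
    (A : Fin (n + 2) → EuclideanSpace ℝ (Fin n))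
    (hA : ∀ i : Fin (n + 2),
      AffineIndependent ℝ (fun j : {j : Fin (n + 2) // j ≠ i} => A j.val))
    (α : Fin (n + 2) → ℝ) (hα0 : ∀ i, α i ≠ 0)
    (hsum : ∑ i, α i = 0) (hdep : ∑ i, α i • A i = 0) :
    ∀ P Q P' Q' : EuclideanSpace ℝ (Fin n),
      ∑ F ∈ (Finset.univ : Finset (Fin (n + 2))).powersetCard (k + 1),
        (∏ s ∈ F, α s) *
          Matrix.det (Matrix.of fun s t : {x : Fin (n + 2) // x ∈ F} =>
            ⟪A s.val - P, A t.val - Q⟫)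
      = ∑ F ∈ (Finset.univ : Finset (Fin (n + 2))).powersetCard (k + 1),
        (∏ s ∈ F, α s) *
          Matrix.det (Matrix.of fun s t : {x : Fin (n + 2) // x ∈ F} =>
            ⟪A s.val - P', A t.val - Q'⟫) := by
  intro P Q P' Q'
  set Mm : EuclideanSpace ℝ (Fin n) → EuclideanSpace ℝ (Fin n) →
      Matrix (Fin (n+2)) (Fin (n+2)) ℝ :=
    fun R S => Matrix.of fun i j => α i * ⟪A i - R, A j - S⟫ with hMm
  have hz : ∀ R : EuclideanSpace ℝ (Fin n), ∑ i, α i • (A i - R) = 0 := by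
    intro R
    have : ∑ i, α i • (A i - R) = (∑ i, α i • A i) - (∑ i, α i) • R := by
      rw [Finset.sum_smul, ← Finset.sum_sub_distrib]
      exact Finset.sum_congr rfl fun i _ => smul_sub (α i) (A i) R
    rw [this, hdep, hsum, zero_smul, sub_zero]
  have key1 : ∀ (R y : EuclideanSpace ℝ (Fin n)), ∑ i, α i * ⟪A i - R, y⟫ = 0 := by
    intro R y
    have : ∑ i, α i * ⟪A i - R, y⟫ = ⟪∑ i, α i • (A i - R), y⟫ := by
      rw [sum_inner]
      exact Finset.sum_congr rfl fun i _ => (real_inner_smul_left _ _ _).symm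
    rw [this, hz, inner_zero_left]
  have key2 : ∀ (S y : EuclideanSpace ℝ (Fin n)), ∑ j, ⟪y, A j - S⟫ * α j = 0 := by
    intro S y
    have : ∑ j, ⟪y, A j - S⟫ * α j = ⟪y, ∑ j, α j • (A j - S)⟫ := by
      rw [inner_sum]
      exact Finset.sum_congr rfl fun j _ => by
        rw [real_inner_smul_right]; ring
    rw [this, hz, inner_zero_right]
  have hpoly : ∀ R S S' : EuclideanSpace ℝ (Fin n),
      detpoly (Mm R S') = detpoly (Mm R S) := by
    intro R S S'
    have e1 : Mm R S' = Mm R S + Matrix.replicateCol Unit (fun i => α i * ⟪A i - R, S - S'⟫)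
        * Matrix.replicateRow Unit (fun _ => (1:ℝ)) := by
      ext i j
      rw [Matrix.add_apply, col_mul_row_apply, mul_one]
      show α i * ⟪A i - R, A j - S'⟫ = α i * ⟪A i - R, A j - S⟫ + α i * ⟪A i - R, S - S'⟫
      rw [← mul_add, ← inner_add_right, sub_add_sub_cancel]
    rw [e1]
    apply detpoly_rank_one_left
    · intro j
      simp only [one_mul, hMm, Matrix.of_apply]
      exact key1 R (A j - S)
    · simp only [one_mul]
      exact key1 R (S - S')
  have hpoly2 : ∀ R R' S : EuclideanSpace ℝ (Fin n),
      detpoly (Mm R' S) = detpoly (Mm R S) := by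
    intro R R' S
    have e2 : Mm R' S = Mm R S + Matrix.replicateCol Unit α
        * Matrix.replicateRow Unit (fun j => ⟪R - R', A j - S⟫) := by
      ext i j
      rw [Matrix.add_apply, col_mul_row_apply]
      show α i * ⟪A i - R', A j - S⟫ = α i * ⟪A i - R, A j - S⟫ + α i * ⟪R - R', A j - S⟫
      rw [← mul_add, ← inner_add_left, sub_add_sub_cancel]
    rw [e2]
    apply detpoly_rank_one_right
    · intro i
      show ∑ j, (α i * ⟪A i - R, A j - S⟫) * α j = 0
      have : ∑ j, (α i * ⟪A i - R, A j - S⟫) * α j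
          = α i * ∑ j, ⟪A i - R, A j - S⟫ * α j := by
        rw [Finset.mul_sum]; exact Finset.sum_congr rfl fun j _ => by ring
      rw [this, key2 S (A i - R), mul_zero]
    · exact key2 S (R - R')
  have hinv : detpoly (Mm P Q) = detpoly (Mm P' Q') := by
    rw [hpoly P Q' Q, hpoly2 P' P Q']
  have hS : ∀ R S : EuclideanSpace ℝ (Fin n),
      ∑ F ∈ (Finset.univ : Finset (Fin (n + 2))).powersetCard (k + 1),
        (∏ s ∈ F, α s) *
          Matrix.det (Matrix.of fun s t : {x : Fin (n + 2) // x ∈ F} =>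
            ⟪A s.val - R, A t.val - S⟫)
      = (detpoly (Mm R S)).coeff (n + 1 - k) := by
    intro R S
    rw [detpoly_coeff]
    have hfilter : (Finset.univ : Finset (Finset (Fin (n+2)))).filter
        (fun s => n + 1 - k = Fintype.card (Fin (n+2)) - s.card)
        = (Finset.univ : Finset (Fin (n + 2))).powersetCard (k + 1) := by
      ext s
      simp only [Finset.mem_filter, Finset.mem_univ, true_and, Finset.mem_powersetCard,
        Finset.subset_univ, Fintype.card_fin]
      have hcard := Finset.card_le_univ s
      rw [Fintype.card_fin] at hcard
      omega
    rw [hfilter]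
    refine Finset.sum_congr rfl fun F _ => ?_
    have hsub : (Mm R S).submatrix (Subtype.val : {i // i ∈ F} → Fin (n+2)) Subtype.val
        = Matrix.of fun i j : {x : Fin (n+2) // x ∈ F} =>
            (fun i : {x : Fin (n+2) // x ∈ F} => α i.val) i *
            (Matrix.of fun s t : {x : Fin (n + 2) // x ∈ F} =>
              ⟪A s.val - R, A t.val - S⟫) i j := rfl
    rw [hsub, Matrix.det_mul_column, Finset.prod_coe_sort]
  rw [hS P Q, hS P' Q', hinv]
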